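/- Let S and T be dependent 3-cutsets of G with |S ∩ T| = 1, say S ∩ T = {p}. Then G − S and G − T each have exactly two connected components. Moreover, if C is a connected component of G − S and D is a connected component of G − T such that C ∩ D = ∅, then there exist vertices u and v with S ∩ D = {u} and T ∩ C = {v}, and the vertices u and v are adjacent (so the corresponding part (C ∪ S) ∩ (D ∪ T) of the decomposition by {S, T} equals {u, v, p}). -/

import Mathlib

namespace Paper

variable {V : Type*}

/-- `S ⊆ V(G)` is a cutset of `G`: the graph `G − S` is disconnected. -/
def IsCutset (G : SimpleGraph V) (S : Set V) : Prop :=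
  ¬ (G.induce (Sᶜ : Set V)).Connected

/-- A 3-cutset: a cutset of exactly 3 vertices. -/
def IsThreeCutset (G : SimpleGraph V) (S : Set V) : Prop :=
  S.ncard = 3 ∧ IsCutset G S

/-- `G` is triconnected: at least 4 vertices and deleting any at most 2 vertices
leaves a connected graph. -/
def IsTriconnected [Fintype V] (G : SimpleGraph V) : Prop :=
  4 ≤ Fintype.card V ∧
    ∀ X : Set V, X.ncard ≤ 2 → (G.induce (Xᶜ : Set V)).Connected

/-- `x` and `y` both survive the deletion of `R` and lie in the same connected
component of `G − R`. -/
def ReachOutside (G : SimpleGraph V) (R : Set V) (x y : V) : Prop :=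
  ∃ (hx : x ∈ (Rᶜ : Set V)) (hy : y ∈ (Rᶜ : Set V)),
    (G.induce (Rᶜ : Set V)).Reachable ⟨x, hx⟩ ⟨y, hy⟩

/-- `R` splits `X`: two vertices of `X \ R` lie in different connected components
of `G − R`. -/
def Splits (G : SimpleGraph V) (R X : Set V) : Prop :=
  ∃ x ∈ X, ∃ y ∈ X, x ∉ R ∧ y ∉ R ∧ ¬ ReachOutside G R x y

/-- Two 3-cutsets are dependent iff one splits the other. -/
def Dependent (G : SimpleGraph V) (S T : Set V) : Prop :=
  Splits G S T ∨ Splits G T S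

/-- The connected component of `G − R` containing `u` (empty if `u ∈ R`). -/
def compOutside (G : SimpleGraph V) (R : Set V) (u : V) : Set V :=
  {y | ReachOutside G R u y}

/-- `C` is a connected component of `G − R`. -/
def IsCompOutside (G : SimpleGraph V) (R : Set V) (C : Set V) : Prop :=
  ∃ u, u ∉ R ∧ C = compOutside G R u

/- ### Helper lemmas -/


lemma reachOutside_refl (G : SimpleGraph V) {R : Set V} {u : V} (h : u ∉ R) :
    ReachOutside G R u u := ⟨h, h, SimpleGraph.Reachable.refl _⟩

lemma ReachOutside.symm {G : SimpleGraph V} {R : Set V} {x y : V}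
    (h : ReachOutside G R x y) : ReachOutside G R y x := by
  obtain ⟨hx, hy, hr⟩ := h; exact ⟨hy, hx, hr.symm⟩

lemma ReachOutside.trans {G : SimpleGraph V} {R : Set V} {x y z : V}
    (h1 : ReachOutside G R x y) (h2 : ReachOutside G R y z) : ReachOutside G R x z := by
  obtain ⟨hx, hy, hr⟩ := h1; obtain ⟨hy', hz, hr'⟩ := h2
  exact ⟨hx, hz, hr.trans hr'⟩

lemma reachOutside_adj {G : SimpleGraph V} {R : Set V} {x y : V}
    (hx : x ∉ R) (hy : y ∉ R) (h : G.Adj x y) : ReachOutside G R x y :=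
  ⟨hx, hy, SimpleGraph.Adj.reachable (by simpa using h)⟩

lemma reachOutside_iff {G : SimpleGraph V} {R : Set V} (a b : (Rᶜ : Set V)) :
    ReachOutside G R a.val b.val ↔ (G.induce (Rᶜ : Set V)).Reachable a b := by
  obtain ⟨x, hx⟩ := a; obtain ⟨y, hy⟩ := b
  exact ⟨fun ⟨_, _, h⟩ => h, fun h => ⟨hx, hy, h⟩⟩

lemma mem_compOutside_self (G : SimpleGraph V) {R : Set V} {u : V} (h : u ∉ R) :
    u ∈ compOutside G R u := reachOutside_refl G h

lemma compOutside_subset (G : SimpleGraph V) {R : Set V} {u : V} :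
    compOutside G R u ⊆ (Rᶜ : Set V) := fun _ hy => hy.2.1

lemma adj_mem_compOutside {G : SimpleGraph V} {R : Set V} {u x y : V}
    (hx : x ∈ compOutside G R u) (ha : G.Adj x y) (hy : y ∉ R) :
    y ∈ compOutside G R u :=
  ReachOutside.trans hx (reachOutside_adj hx.2.1 hy ha)

lemma walk_stays (G : SimpleGraph V) (W A : Set V)
    (hcl : ∀ x ∈ A, ∀ y, G.Adj x y → y ∈ A ∪ W) :
    ∀ (x y : (Wᶜ : Set V)) (w : (G.induce (Wᶜ : Set V)).Walk x y), x.val ∈ A → y.val ∈ A := by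
  intro x y w
  induction w with
  | nil => exact id
  | @cons a b c h p ih =>
      intro ha
      have hb : b.val ∈ A ∪ W := hcl a.val ha b.val (by simpa using h)
      exact ih (hb.resolve_right b.2)

lemma cut_lower [Fintype V] {G : SimpleGraph V} (htri : IsTriconnected G) {A W : Set V}
    (hA : A.Nonempty) (hdisj : ∀ x ∈ A, x ∉ W) (b : V) (hbA : b ∉ A) (hbW : b ∉ W)
    (hcl : ∀ x ∈ A, ∀ y, G.Adj x y → y ∈ A ∪ W) : 3 ≤ W.ncard := by
  by_contra h
  have hconn := htri.2 W (by omega)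
  obtain ⟨a, ha⟩ := hA
  obtain ⟨w⟩ := hconn.preconnected ⟨a, hdisj a ha⟩ ⟨b, hbW⟩
  exact hbA (walk_stays G W A hcl _ _ w ha)

/-- Claim A: every vertex of a 3-set has a neighbour in every component of `G − S`. -/
lemma exists_nbr_in_comp [Fintype V] {G : SimpleGraph V} (htri : IsTriconnected G)
    {S : Set V} (hS3 : S.ncard = 3) {s : V} (hs : s ∈ S) {c : V} (hc : c ∉ S) :
    ∃ w ∈ compOutside G S c, G.Adj s w := by
  by_contra h
  push_neg at h
  have h3 : 3 ≤ (S \ {s}).ncard := by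
    refine cut_lower htri ⟨c, mem_compOutside_self G hc⟩ ?_ s ?_ ?_ ?_
    · intro x hx hxW
      exact (compOutside_subset G hx) hxW.1
    · intro hsC
      exact (compOutside_subset G hsC) hs
    · simp
    · intro x hx y ha
      by_cases hyS : y ∈ S
      · right
        refine ⟨hyS, ?_⟩
        rintro rfl
        exact h x hx ha.symm
      · exact Or.inl (adj_mem_compOutside hx ha hyS)
  rw [Set.ncard_diff_singleton_of_mem hs] at h3
  omega

lemma comp_subset_comp {G : SimpleGraph V} {S T : Set V} {c : V} (hc : c ∉ S)
    (hCT : ∀ x ∈ compOutside G S c, x ∉ T) :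
    compOutside G S c ⊆ compOutside G T c := by
  have aux : ∀ (x y : (Sᶜ : Set V)) (w : (G.induce (Sᶜ : Set V)).Walk x y),
      x.val ∈ compOutside G S c → ReachOutside G T x.val y.val := by
    intro x y w
    induction w with
    | nil => intro hx; exact reachOutside_refl G (hCT _ hx)
    | @cons a b d h p ih =>
        intro ha
        have hbC : b.val ∈ compOutside G S c := adj_mem_compOutside ha (by simpa using h) b.2
        exact ReachOutside.trans
          (reachOutside_adj (hCT _ ha) (hCT _ hbC) (by simpa using h)) (ih hbC)
  intro z hz
  obtain ⟨hc', hz', hr⟩ := hz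
  obtain ⟨w⟩ := hr
  exact aux _ _ w (mem_compOutside_self G hc)

lemma not_both_in_comp {G : SimpleGraph V} {T : Set V} {x y d : V}
    (hxy : ¬ ReachOutside G T x y) (hx : x ∈ compOutside G T d)
    (hy : y ∈ compOutside G T d) : False := hxy (ReachOutside.trans (ReachOutside.symm hx) hy)

lemma triple_eq [Fintype V] {S : Set V} (hS3 : S.ncard = 3) {p x y : V}
    (hpS : p ∈ S) (hxS : x ∈ S) (hyS : y ∈ S)
    (hpx : p ≠ x) (hpy : p ≠ y) (hxy : x ≠ y) : S = {p, x, y} := by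
  symm
  apply Set.eq_of_subset_of_ncard_le
  · intro z hz
    rcases hz with rfl | rfl | rfl
    exacts [hpS, hxS, hyS]
  · have h3 : ({p, x, y} : Set V).ncard = 3 :=
      Set.ncard_eq_three.mpr ⟨p, x, y, hpx, hpy, hxy, rfl⟩
    omega
  · exact Set.toFinite S

/-- Every component of `G − S` meets `T`, given that `T` splits `S`. -/
lemma comp_meets [Fintype V] {G : SimpleGraph V} (htri : IsTriconnected G)
    {S T : Set V} {p : V} (hp : S ∩ T = {p}) (hS3 : S.ncard = 3)
    {x y : V} (hxS : x ∈ S) (hyS : y ∈ S) (hxT : x ∉ T) (hyT : y ∉ T)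
    (hxy : ¬ ReachOutside G T x y)
    {c : V} (hc : c ∉ S) : (compOutside G S c ∩ T).Nonempty := by
  by_contra hne
  rw [Set.not_nonempty_iff_eq_empty] at hne
  have hCT : ∀ z ∈ compOutside G S c, z ∉ T := by
    intro z hz hzT
    exact absurd (Set.eq_empty_iff_forall_notMem.mp hne z ⟨hz, hzT⟩) (fun h => h)
  have hpm : p ∈ S ∩ T := by rw [hp]; rfl
  have hxyne : x ≠ y := by rintro rfl; exact hxy (reachOutside_refl G hxT)
  have hpx : p ≠ x := by rintro rfl; exact hxT hpm.2
  have hpy : p ≠ y := by rintro rfl; exact hyT hpm.2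
  have hSeq : S = {p, x, y} := triple_eq hS3 hpm.1 hxS hyS hpx hpy hxyne
  have hcT : c ∉ T := hCT c (mem_compOutside_self G hc)
  set C := compOutside G S c with hC
  set D := compOutside G T c with hD
  have hsub : C ⊆ D := comp_subset_comp hc hCT
  -- pick b0 ∈ {x,y} with b0 ∉ D, a0 the other
  obtain ⟨b0, a0, hb0S, hb0T, hb0D, ha0S, ha0T, hcover⟩ :
      ∃ b0 a0, b0 ∈ S ∧ b0 ∉ T ∧ b0 ∉ D ∧ a0 ∈ S ∧ a0 ∉ T ∧
        ∀ z ∈ S, z = p ∨ z = a0 ∨ z = b0 := by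
    by_cases hxD : x ∈ D
    · refine ⟨y, x, hyS, hyT, ?_, hxS, hxT, ?_⟩
      · intro hyD; exact not_both_in_comp hxy hxD hyD
      · intro z hz
        rw [hSeq] at hz
        simp only [Set.mem_insert_iff, Set.mem_singleton_iff] at hz
        tauto
    · refine ⟨x, y, hxS, hxT, hxD, hyS, hyT, ?_⟩
      intro z hz
      rw [hSeq] at hz
      simp only [Set.mem_insert_iff, Set.mem_singleton_iff] at hz
      tauto
  have h3 : 3 ≤ ((S ∩ D) ∪ {p} : Set V).ncard := by
    refine cut_lower htri ⟨c, mem_compOutside_self G hc⟩ ?_ b0 ?_ ?_ ?_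
    · intro z hz hzW
      have hzS : z ∉ S := (compOutside_subset G hz)
      rcases hzW with h1 | h1
      · exact hzS h1.1
      · exact hzS (Set.mem_singleton_iff.mp h1 ▸ hpm.1)
    · intro hb0C; exact (compOutside_subset G hb0C) hb0S
    · rintro (h1 | h1)
      · exact hb0D h1.2
      · rw [Set.mem_singleton_iff] at h1
        rw [h1] at hb0T; exact hb0T hpm.2
    · intro z hz w ha
      by_cases hwS : w ∈ S
      · rcases hcover w hwS with rfl | rfl | rfl
        · exact Or.inr (Or.inr rfl)
        · refine Or.inr (Or.inl ⟨hwS, ?_⟩)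
          exact adj_mem_compOutside (hsub hz) ha ha0T
        · refine Or.inr (Or.inl ⟨hwS, ?_⟩)
          exact adj_mem_compOutside (hsub hz) ha hb0T
      · exact Or.inl (adj_mem_compOutside hz ha hwS)
  have hWsub : ((S ∩ D) ∪ {p} : Set V) ⊆ {a0, p} := by
    rintro z (⟨hzS, hzD⟩ | h1)
    · rcases hcover z hzS with rfl | rfl | rfl
      · exact Or.inr rfl
      · exact Or.inl rfl
      · exact absurd hzD hb0D
    · exact Or.inr h1
  have := Set.ncard_le_ncard hWsub (Set.toFinite _)
  have h2 : ({a0, p} : Set V).ncard ≤ 2 := by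
    refine le_trans (Set.ncard_insert_le _ _) ?_
    simp
  omega

lemma inter_single [Fintype V] {G : SimpleGraph V} (htri : IsTriconnected G)
    {S T : Set V} {p : V} (hp : S ∩ T = {p}) (hS3 : S.ncard = 3) (hT3 : T.ncard = 3)
    {s1 s2 : V} (hs1S : s1 ∈ S) (hs2S : s2 ∈ S) (hs1T : s1 ∉ T) (hs2T : s2 ∉ T)
    (hsS : ¬ ReachOutside G T s1 s2)
    {t1 t2 : V} (ht1 : t1 ∈ T) (ht2 : t2 ∈ T) (ht1S : t1 ∉ S) (ht2S : t2 ∉ S)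
    (htT : ¬ ReachOutside G S t1 t2)
    {c : V} (hc : c ∉ S) :
    T ∩ compOutside G S c = {t1} ∨ T ∩ compOutside G S c = {t2} := by
  obtain ⟨w, hwC, hwT⟩ := comp_meets htri hp hS3 hs1S hs2S hs1T hs2T hsS hc
  have hpm : p ∈ S ∩ T := by rw [hp]; rfl
  have ht12 : t1 ≠ t2 := by rintro rfl; exact htT (reachOutside_refl G ht1S)
  have hpt1 : p ≠ t1 := by rintro rfl; exact ht1S hpm.1
  have hpt2 : p ≠ t2 := by rintro rfl; exact ht2S hpm.1
  have hTeq : T = {p, t1, t2} := triple_eq hT3 hpm.2 ht1 ht2 hpt1 hpt2 ht12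
  have hmem : ∀ z ∈ T ∩ compOutside G S c, z = t1 ∨ z = t2 := by
    rintro z ⟨hzT, hzC⟩
    have hzS : z ∉ S := compOutside_subset G hzC
    rw [hTeq] at hzT
    simp only [Set.mem_insert_iff, Set.mem_singleton_iff] at hzT
    rcases hzT with rfl | h | h
    · exact absurd hpm.1 hzS
    · exact Or.inl h
    · exact Or.inr h
  have hnot : ¬ (t1 ∈ compOutside G S c ∧ t2 ∈ compOutside G S c) := by
    rintro ⟨h1, h2⟩; exact not_both_in_comp htT h1 h2
  rcases hmem w ⟨hwT, hwC⟩ with h | h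
  · left
    rw [h] at hwC hwT
    refine Set.eq_singleton_iff_unique_mem.mpr ⟨⟨hwT, hwC⟩, ?_⟩
    intro z hz
    rcases hmem z hz with h' | h'
    · exact h'
    · exact (hnot ⟨hwC, h' ▸ hz.2⟩).elim
  · right
    rw [h] at hwC hwT
    refine Set.eq_singleton_iff_unique_mem.mpr ⟨⟨hwT, hwC⟩, ?_⟩
    intro z hz
    rcases hmem z hz with h' | h'
    · exact (hnot ⟨h' ▸ hz.2, hwC⟩).elim
    · exact h'

lemma splits_symm [Fintype V] {G : SimpleGraph V} (htri : IsTriconnected G)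
    {S T : Set V} {p : V} (hp : S ∩ T = {p}) (hS3 : S.ncard = 3)
    (hScut : IsCutset G S) (hTS : Splits G T S) : Splits G S T := by
  obtain ⟨s1, hs1S, s2, hs2S, hs1T, hs2T, hsS⟩ := hTS
  have hSne : ∃ v, v ∉ S := by
    by_contra h
    push_neg at h
    have huniv : S = Set.univ := Set.eq_univ_of_forall h
    rw [huniv, Set.ncard_univ, Nat.card_eq_fintype_card] at hS3
    have := htri.1
    omega
  obtain ⟨v0, hv0⟩ := hSne
  have hne : Nonempty (Sᶜ : Set V) := ⟨⟨v0, hv0⟩⟩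
  have hnp : ¬ (G.induce (Sᶜ : Set V)).Preconnected := by
    intro hpre
    exact hScut ⟨hpre⟩
  rw [SimpleGraph.Preconnected] at hnp
  push_neg at hnp
  obtain ⟨a, b, hab⟩ := hnp
  obtain ⟨wa, hwaC, hwaT⟩ := comp_meets htri hp hS3 hs1S hs2S hs1T hs2T hsS a.2
  obtain ⟨wb, hwbC, hwbT⟩ := comp_meets htri hp hS3 hs1S hs2S hs1T hs2T hsS b.2
  refine ⟨wa, hwaT, wb, hwbT, compOutside_subset G hwaC, compOutside_subset G hwbC, ?_⟩
  intro hr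
  have h1 : ReachOutside G S a.val wa := hwaC
  have h2 : ReachOutside G S b.val wb := hwbC
  have h3 : ReachOutside G S a.val b.val :=
    ReachOutside.trans h1 (ReachOutside.trans hr (ReachOutside.symm h2))
  exact hab ((reachOutside_iff a b).mp h3)

lemma card_two [Fintype V] {G : SimpleGraph V} {S : Set V} {t1 t2 : V}
    (ht1S : t1 ∉ S) (ht2S : t2 ∉ S) (hnr : ¬ ReachOutside G S t1 t2)
    (hall : ∀ c, c ∉ S → ReachOutside G S c t1 ∨ ReachOutside G S c t2) :
    Nat.card (G.induce (Sᶜ : Set V)).ConnectedComponent = 2 := by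
  rw [Nat.card_eq_two_iff]
  refine ⟨(G.induce (Sᶜ : Set V)).connectedComponentMk ⟨t1, ht1S⟩,
    (G.induce (Sᶜ : Set V)).connectedComponentMk ⟨t2, ht2S⟩, ?_, ?_⟩
  · intro h
    exact hnr ((reachOutside_iff ⟨t1, ht1S⟩ ⟨t2, ht2S⟩).mpr
      (SimpleGraph.ConnectedComponent.eq.mp h))
  · ext cc
    simp only [Set.mem_insert_iff, Set.mem_singleton_iff, Set.mem_univ, iff_true]
    induction cc using SimpleGraph.ConnectedComponent.ind with
    | _ z =>
      rcases hall z.val z.2 with h | h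
      · exact Or.inl (SimpleGraph.ConnectedComponent.sound
          ((reachOutside_iff z ⟨t1, ht1S⟩).mp h))
      · exact Or.inr (SimpleGraph.ConnectedComponent.sound
          ((reachOutside_iff z ⟨t2, ht2S⟩).mp h))

/-- Corollary 3: dependent 3-cutsets sharing exactly one vertex `p`. -/
theorem stmt_2 [Fintype V] (G : SimpleGraph V)
    (htri : IsTriconnected G) (hbig : 6 < Fintype.card V)
    (S T : Set V) (hS : IsThreeCutset G S) (hT : IsThreeCutset G T)
    (hdep : Dependent G S T) (p : V) (hp : S ∩ T = {p}) :
    Nat.card (G.induce (Sᶜ : Set V)).ConnectedComponent = 2 ∧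
    Nat.card (G.induce (Tᶜ : Set V)).ConnectedComponent = 2 ∧
    ∀ C D : Set V, IsCompOutside G S C → IsCompOutside G T D → C ∩ D = ∅ →
      ∃ u v : V, S ∩ D = {u} ∧ T ∩ C = {v} ∧ G.Adj u v ∧
        (C ∪ S) ∩ (D ∪ T) = {u, v, p} := by
  obtain ⟨hS3, hScut⟩ := hS
  obtain ⟨hT3, hTcut⟩ := hT
  have hp' : T ∩ S = {p} := by rw [Set.inter_comm]; exact hp
  have hboth : Splits G S T ∧ Splits G T S := by
    rcases hdep with h | h
    · exact ⟨h, splits_symm htri hp' hT3 hTcut h⟩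
    · exact ⟨splits_symm htri hp hS3 hScut h, h⟩
  obtain ⟨hST, hTS⟩ := hboth
  obtain ⟨t1, ht1T, t2, ht2T, ht1S, ht2S, htT⟩ := hST
  obtain ⟨s1, hs1S, s2, hs2S, hs1T, hs2T, hsS⟩ := hTS
  have hsingS : ∀ c, c ∉ S →
      T ∩ compOutside G S c = {t1} ∨ T ∩ compOutside G S c = {t2} :=
    fun c hc => inter_single htri hp hS3 hT3 hs1S hs2S hs1T hs2T hsS
      ht1T ht2T ht1S ht2S htT hc
  have hsingT : ∀ d, d ∉ T →
      S ∩ compOutside G T d = {s1} ∨ S ∩ compOutside G T d = {s2} :=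
    fun d hd => inter_single htri hp' hT3 hS3 ht1T ht2T ht1S ht2S htT
      hs1S hs2S hs1T hs2T hsS hd
  have hpm : p ∈ S ∩ T := by rw [hp]; rfl
  refine ⟨?_, ?_, ?_⟩
  · apply card_two ht1S ht2S htT
    intro c hc
    rcases hsingS c hc with h | h
    · have : t1 ∈ T ∩ compOutside G S c := by rw [h]; rfl
      exact Or.inl (ReachOutside.symm this.2).symm
    · have : t2 ∈ T ∩ compOutside G S c := by rw [h]; rfl
      exact Or.inr this.2
  · apply card_two hs1T hs2T hsS
    intro d hd
    rcases hsingT d hd with h | h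
    · have : s1 ∈ S ∩ compOutside G T d := by rw [h]; rfl
      exact Or.inl this.2
    · have : s2 ∈ S ∩ compOutside G T d := by rw [h]; rfl
      exact Or.inr this.2
  · intro C D hC hD hCD
    obtain ⟨c, hc, rfl⟩ := hC
    obtain ⟨d, hd, rfl⟩ := hD
    obtain ⟨u, hu⟩ : ∃ u, S ∩ compOutside G T d = {u} := by
      rcases hsingT d hd with h | h
      exacts [⟨_, h⟩, ⟨_, h⟩]
    obtain ⟨v, hv⟩ : ∃ v, T ∩ compOutside G S c = {v} := by
      rcases hsingS c hc with h | h
      exacts [⟨_, h⟩, ⟨_, h⟩]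
    have huM : u ∈ S ∩ compOutside G T d := by rw [hu]; rfl
    have hvM : v ∈ T ∩ compOutside G S c := by rw [hv]; rfl
    obtain ⟨w, hwC, haw⟩ := exists_nbr_in_comp htri hS3 huM.1 hc
    have hwD : w ∉ compOutside G T d := fun hwD =>
      (Set.eq_empty_iff_forall_notMem.mp hCD w ⟨hwC, hwD⟩)
    have hwT : w ∈ T := by
      by_contra hwT
      exact hwD (adj_mem_compOutside huM.2 haw hwT)
    have hwv : w = v := by
      have hmem : w ∈ T ∩ compOutside G S c := ⟨hwT, hwC⟩
      rw [hv] at hmem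
      exact hmem
    refine ⟨u, v, hu, hv, hwv ▸ haw, ?_⟩
    ext z
    simp only [Set.mem_inter_iff, Set.mem_union, Set.mem_insert_iff, Set.mem_singleton_iff]
    constructor
    · rintro ⟨hzl, hzr⟩
      rcases hzl with hzC | hzS
      · rcases hzr with hzD | hzT
        · exact ((Set.eq_empty_iff_forall_notMem.mp hCD z ⟨hzC, hzD⟩)).elim
        · have hmem : z ∈ T ∩ compOutside G S c := ⟨hzT, hzC⟩
          rw [hv] at hmem
          exact Or.inr (Or.inl hmem)
      · rcases hzr with hzD | hzT
        · have hmem : z ∈ S ∩ compOutside G T d := ⟨hzS, hzD⟩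
          rw [hu] at hmem
          exact Or.inl hmem
        · have hmem : z ∈ S ∩ T := ⟨hzS, hzT⟩
          rw [hp] at hmem
          exact Or.inr (Or.inr hmem)
    · rintro (rfl | rfl | rfl)
      · exact ⟨Or.inr huM.1, Or.inl huM.2⟩
      · exact ⟨Or.inl hvM.2, Or.inr hvM.1⟩
      · exact ⟨Or.inr hpm.1, Or.inr hpm.2⟩

end Paper
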